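/- Let F₀ and F₁ be filters on ℕ containing the Fréchet filter. Let D_× be the set of pairs ((s₀,A₀),(s₁,A₁)) ∈ M_{F₀} × M_{F₁} with |s₀| = |s₁|, and let D_⊕ be the set of conditions (s,A) ∈ M_{F₀ ⊕ F₁} with |s| even. Then D_× is dense in M_{F₀} × M_{F₁}, D_⊕ is dense in M_{F₀ ⊕ F₁}, and the map ι : D_× → D_⊕ defined by ((s₀,A₀),(s₁,A₁)) ↦ (s₀ ⊕ s₁, A₀ ⊕ A₁) is an order isomorphism; consequently M_{F₀} × M_{F₁} and M_{F₀ ⊕ F₁} are forcing equivalent. -/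

import Mathlib

/-- A (set-theoretic) filter on ℕ containing the Fréchet filter: a collection
of subsets of ℕ closed under intersections and supersets, containing all
cofinite sets. -/
def IsFilterOnNat (F : Set (Set ℕ)) : Prop :=
  (∀ A ∈ F, ∀ B ∈ F, A ∩ B ∈ F) ∧
  (∀ A ∈ F, ∀ B : Set ℕ, A ⊆ B → B ∈ F) ∧
  (∀ A : Set ℕ, Aᶜ.Finite → A ∈ F)

/-- A condition of Mathias forcing `M_F`: a pair `(s, A)` with `s` a finite
binary sequence and `A ∈ F`. -/
structure MCond (F : Set (Set ℕ)) where
  s : List Bool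
  A : Set ℕ
  mem : A ∈ F

/-- The Mathias order: `(t, B) ≤ (s, A)` iff `t` end-extends `s`, `B ⊆ A`, and
every `n ≥ |s|` with `t(n) = 1` belongs to `A`. -/
instance MCond.instPreorder (F : Set (Set ℕ)) : Preorder (MCond F) where
  le q p := p.s <+: q.s ∧ q.A ⊆ p.A ∧
    ∀ n : ℕ, p.s.length ≤ n → q.s.getD n false = true → n ∈ p.A
  le_refl p := by
    refine ⟨List.prefix_rfl, subset_rfl, fun n hn ht => ?_⟩
    rw [List.getD_eq_default _ _ hn] at ht
    exact absurd ht (by simp)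
  le_trans a b c hab hbc := by
    obtain ⟨hab1, hab2, hab3⟩ := hab
    obtain ⟨hbc1, hbc2, hbc3⟩ := hbc
    refine ⟨hbc1.trans hab1, hab2.trans hbc2, fun n hn ht => ?_⟩
    by_cases hlen : n < b.s.length
    · apply hbc3 n hn
      rw [List.getD_eq_getElem _ _ hlen, hab1.getElem hlen]
      rw [List.getD_eq_getElem _ _ (lt_of_lt_of_le hlen hab1.length_le)] at ht
      exact ht
    · exact hbc2 (hab3 n (not_lt.mp hlen) ht)

/-- Interleaving of two finite binary sequences of equal length `L`:
the sequence `s₀ ⊕ s₁` of length `2L` with `(s₀ ⊕ s₁)(2n) = s₀(n)` and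
`(s₀ ⊕ s₁)(2n+1) = s₁(n)`. -/
def seqOplus (s₀ s₁ : List Bool) : List Bool :=
  List.ofFn fun i : Fin (s₀.length + s₁.length) =>
    if i.val % 2 = 0 then s₀.getD (i.val / 2) false else s₁.getD (i.val / 2) false

/-- `A ⊕ B := {2n : n ∈ A} ∪ {2m+1 : m ∈ B}`. -/
def setOplus (A B : Set ℕ) : Set ℕ :=
  {k : ℕ | ∃ n ∈ A, k = 2 * n} ∪ {k : ℕ | ∃ m ∈ B, k = 2 * m + 1}

/-- `F₀ ⊕ F₁ := {A ⊕ B : A ∈ F₀, B ∈ F₁}`. -/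
def filterOplus (F₀ F₁ : Set (Set ℕ)) : Set (Set ℕ) :=
  {C : Set ℕ | ∃ A ∈ F₀, ∃ B ∈ F₁, C = setOplus A B}

/-- `D_×`: the pairs of conditions with first coordinates of equal length. -/
def Dtimes (F₀ F₁ : Set (Set ℕ)) : Set (MCond F₀ × MCond F₁) :=
  {x | x.1.s.length = x.2.s.length}

/-- `D_⊕`: the conditions of `M_{F₀ ⊕ F₁}` whose finite part has even length. -/
def Doplus (F₀ F₁ : Set (Set ℕ)) : Set (MCond (filterOplus F₀ F₁)) :=
  {x | x.s.length % 2 = 0}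


lemma MCond.ext' {F : Set (Set ℕ)} {p q : MCond F} (hs : p.s = q.s) (hA : p.A = q.A) : p = q := by
  cases p; cases q; cases hs; cases hA; rfl

lemma MCond.le_def {F : Set (Set ℕ)} {q p : MCond F} :
    q ≤ p ↔ p.s <+: q.s ∧ q.A ⊆ p.A ∧
      ∀ n : ℕ, p.s.length ≤ n → q.s.getD n false = true → n ∈ p.A := Iff.rfl

lemma length_seqOplus (s₀ s₁ : List Bool) :
    (seqOplus s₀ s₁).length = s₀.length + s₁.length := by simp [seqOplus]

lemma getD_seqOplus {s₀ s₁ : List Bool} (h : s₀.length = s₁.length) (k : ℕ) :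
    (seqOplus s₀ s₁).getD k false =
      if k % 2 = 0 then s₀.getD (k / 2) false else s₁.getD (k / 2) false := by
  by_cases hk : k < s₀.length + s₁.length
  · rw [List.getD_eq_getElem _ _ (by rwa [length_seqOplus])]
    simp [seqOplus]
  · have h0 : s₀.length ≤ k / 2 := by omega
    rw [List.getD_eq_default _ _ (by rw [length_seqOplus]; omega),
      List.getD_eq_default _ _ h0, List.getD_eq_default _ _ (h ▸ h0)]
    split <;> rfl

lemma mem_setOplus_even {A B : Set ℕ} {n : ℕ} : 2 * n ∈ setOplus A B ↔ n ∈ A := by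
  constructor
  · rintro (⟨m, hm, he⟩ | ⟨m, hm, he⟩)
    · obtain rfl : n = m := by omega
      exact hm
    · omega
  · intro h; exact Or.inl ⟨n, h, rfl⟩

lemma mem_setOplus_odd {A B : Set ℕ} {n : ℕ} : 2 * n + 1 ∈ setOplus A B ↔ n ∈ B := by
  constructor
  · rintro (⟨m, hm, he⟩ | ⟨m, hm, he⟩)
    · omega
    · obtain rfl : n = m := by omega
      exact hm
  · intro h; exact Or.inr ⟨n, h, rfl⟩

lemma setOplus_subset_iff {A B A' B' : Set ℕ} :
    setOplus A B ⊆ setOplus A' B' ↔ A ⊆ A' ∧ B ⊆ B' := by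
  constructor
  · intro h
    constructor
    · intro n hn; exact mem_setOplus_even.mp (h (mem_setOplus_even.mpr hn))
    · intro n hn; exact mem_setOplus_odd.mp (h (mem_setOplus_odd.mpr hn))
  · rintro ⟨h1, h2⟩ k hk
    rcases hk with ⟨m, hm, rfl⟩ | ⟨m, hm, rfl⟩
    · exact Or.inl ⟨m, h1 hm, rfl⟩
    · exact Or.inr ⟨m, h2 hm, rfl⟩

lemma setOplus_evens {A B : Set ℕ} : {n : ℕ | 2 * n ∈ setOplus A B} = A := by
  ext n; exact mem_setOplus_even

lemma setOplus_odds {A B : Set ℕ} : {n : ℕ | 2 * n + 1 ∈ setOplus A B} = B := by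
  ext n; exact mem_setOplus_odd

lemma setOplus_recombine (C : Set ℕ) :
    setOplus {n : ℕ | 2 * n ∈ C} {n : ℕ | 2 * n + 1 ∈ C} = C := by
  ext k
  constructor
  · rintro (⟨m, hm, rfl⟩ | ⟨m, hm, rfl⟩) <;> exact hm
  · intro hk
    rcases Nat.even_or_odd k with ⟨m, hm⟩ | ⟨m, hm⟩
    · exact Or.inl ⟨m, show 2*m ∈ C by rw [show 2*m = k by omega]; exact hk, by omega⟩
    · exact Or.inr ⟨m, show 2*m+1 ∈ C by rw [show 2*m+1 = k by omega]; exact hk, by omega⟩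

lemma list_eq_of_getD {l₁ l₂ : List Bool} (hl : l₁.length = l₂.length)
    (h : ∀ i < l₁.length, l₁.getD i false = l₂.getD i false) : l₁ = l₂ := by
  apply List.ext_getElem hl
  intro i h1 h2
  have := h i h1
  rwa [List.getD_eq_getElem _ _ h1, List.getD_eq_getElem _ _ h2] at this

lemma prefix_iff_getD {l₁ l₂ : List Bool} :
    l₁ <+: l₂ ↔ l₁.length ≤ l₂.length ∧
      ∀ i < l₁.length, l₁.getD i false = l₂.getD i false := by
  constructor
  · intro h
    refine ⟨h.length_le, fun i hi => ?_⟩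
    rw [List.getD_eq_getElem _ _ hi,
      List.getD_eq_getElem _ _ (lt_of_lt_of_le hi h.length_le), h.getElem hi]
  · rintro ⟨hlen, h⟩
    rw [List.prefix_iff_eq_take]
    apply list_eq_of_getD (by simp [hlen]) 
    intro i hi
    rw [List.getD_eq_getElem _ _ hi,
      List.getD_eq_getElem _ _ (show i < (List.take l₁.length l₂).length by simp; omega),
      List.getElem_take]
    have := h i hi
    rw [List.getD_eq_getElem _ _ hi,
      List.getD_eq_getElem _ _ (lt_of_lt_of_le hi hlen)] at this
    exact this

lemma seqOplus_prefix_iff {s₀ s₁ t₀ t₁ : List Bool}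
    (hs : s₀.length = s₁.length) (ht : t₀.length = t₁.length) :
    seqOplus s₀ s₁ <+: seqOplus t₀ t₁ ↔ s₀ <+: t₀ ∧ s₁ <+: t₁ := by
  rw [prefix_iff_getD, prefix_iff_getD, prefix_iff_getD,
    length_seqOplus, length_seqOplus]
  constructor
  · rintro ⟨hlen, h⟩
    refine ⟨⟨by omega, fun i hi => ?_⟩, ⟨by omega, fun i hi => ?_⟩⟩
    · have := h (2 * i) (by omega)
      rw [getD_seqOplus hs, getD_seqOplus ht] at this
      simpa [Nat.mul_div_cancel_left, Nat.mul_mod_right] using this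
    · have := h (2 * i + 1) (by omega)
      rw [getD_seqOplus hs, getD_seqOplus ht] at this
      have h2 : (2 * i + 1) % 2 ≠ 0 := by omega
      have h3 : (2 * i + 1) / 2 = i := by omega
      simpa [h2, h3] using this
  · rintro ⟨⟨hl0, h0⟩, ⟨hl1, h1⟩⟩
    refine ⟨by omega, fun i hi => ?_⟩
    rw [getD_seqOplus hs, getD_seqOplus ht]
    split
    · exact h0 _ (by omega)
    · exact h1 _ (by omega)

lemma oplus_cond3_iff {s₀ s₁ t₀ t₁ : List Bool} {A₀ A₁ : Set ℕ}
    (hs : s₀.length = s₁.length) (ht : t₀.length = t₁.length) :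
    (∀ n, (seqOplus s₀ s₁).length ≤ n → (seqOplus t₀ t₁).getD n false = true →
        n ∈ setOplus A₀ A₁)
    ↔ (∀ n, s₀.length ≤ n → t₀.getD n false = true → n ∈ A₀) ∧
      (∀ n, s₁.length ≤ n → t₁.getD n false = true → n ∈ A₁) := by
  rw [length_seqOplus]
  constructor
  · intro h
    constructor
    · intro n hn htn
      apply mem_setOplus_even.mp
      apply h (2 * n) (by omega)
      rw [getD_seqOplus ht]
      simpa using htn
    · intro n hn htn
      apply mem_setOplus_odd.mp
      apply h (2 * n + 1) (by omega)
      rw [getD_seqOplus ht]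
      have h2 : (2 * n + 1) % 2 ≠ 0 := by omega
      have h3 : (2 * n + 1) / 2 = n := by omega
      simpa [h2, h3] using htn
  · rintro ⟨h0, h1⟩ n hn htn
    rw [getD_seqOplus ht] at htn
    by_cases hpar : n % 2 = 0
    · rw [if_pos hpar] at htn
      have : n = 2 * (n / 2) := by omega
      rw [this]
      exact mem_setOplus_even.mpr (h0 _ (by omega) htn)
    · rw [if_neg hpar] at htn
      have : n = 2 * (n / 2) + 1 := by omega
      rw [this]
      exact mem_setOplus_odd.mpr (h1 _ (by omega) htn)

def evens (s : List Bool) : List Bool :=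
  List.ofFn fun i : Fin (s.length / 2) => s.getD (2 * i.val) false

def odds (s : List Bool) : List Bool :=
  List.ofFn fun i : Fin (s.length / 2) => s.getD (2 * i.val + 1) false

lemma length_evens (s : List Bool) : (evens s).length = s.length / 2 := by simp [evens]
lemma length_odds (s : List Bool) : (odds s).length = s.length / 2 := by simp [odds]

lemma getD_evens (s : List Bool) (i : ℕ) (hi : i < s.length / 2) :
    (evens s).getD i false = s.getD (2 * i) false := by
  rw [List.getD_eq_getElem _ _ (by rw [length_evens]; exact hi)]
  simp [evens]

lemma getD_odds (s : List Bool) (i : ℕ) (hi : i < s.length / 2) :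
    (odds s).getD i false = s.getD (2 * i + 1) false := by
  rw [List.getD_eq_getElem _ _ (by rw [length_odds]; exact hi)]
  simp [odds]

lemma evens_seqOplus {s₀ s₁ : List Bool} (h : s₀.length = s₁.length) :
    evens (seqOplus s₀ s₁) = s₀ := by
  apply list_eq_of_getD (by rw [length_evens, length_seqOplus]; omega)
  intro i hi
  rw [length_evens, length_seqOplus] at hi
  rw [getD_evens _ _ (by rw [length_seqOplus]; omega), getD_seqOplus h]
  simp

lemma odds_seqOplus {s₀ s₁ : List Bool} (h : s₀.length = s₁.length) :
    odds (seqOplus s₀ s₁) = s₁ := by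
  apply list_eq_of_getD (by rw [length_odds, length_seqOplus]; omega)
  intro i hi
  rw [length_odds, length_seqOplus] at hi
  rw [getD_odds _ _ (by rw [length_seqOplus]; omega), getD_seqOplus h]
  have h2 : (2 * i + 1) % 2 ≠ 0 := by omega
  have h3 : (2 * i + 1) / 2 = i := by omega
  simp [h2, h3]

lemma seqOplus_recombine {s : List Bool} (h : s.length % 2 = 0) :
    seqOplus (evens s) (odds s) = s := by
  apply list_eq_of_getD (by rw [length_seqOplus, length_evens, length_odds]; omega)
  intro i hi
  rw [length_seqOplus, length_evens, length_odds] at hi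
  rw [getD_seqOplus (by rw [length_evens, length_odds])]
  by_cases hpar : i % 2 = 0
  · rw [if_pos hpar, getD_evens _ _ (by omega)]
    congr 1; omega
  · rw [if_neg hpar, getD_odds _ _ (by omega)]
    congr 1; omega

lemma pad_le {F : Set (Set ℕ)} (p : MCond F) (k : ℕ) :
    (⟨p.s ++ List.replicate k false, p.A, p.mem⟩ : MCond F) ≤ p := by
  refine ⟨List.prefix_append _ _, subset_rfl, fun n hn ht => ?_⟩
  exfalso
  by_cases h : n < p.s.length + k
  · rw [List.getD_eq_getElem _ _ (by simpa using h),
      List.getElem_append_right (by omega)] at ht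
    simp at ht
  · rw [List.getD_eq_default _ _ (by simp; omega)] at ht
    simp at ht

lemma evens_mem {F₀ F₁ : Set (Set ℕ)} {C : Set ℕ} (hC : C ∈ filterOplus F₀ F₁) :
    {n : ℕ | 2 * n ∈ C} ∈ F₀ := by
  obtain ⟨A, hA, B, hB, rfl⟩ := hC; rwa [setOplus_evens]

lemma odds_mem {F₀ F₁ : Set (Set ℕ)} {C : Set ℕ} (hC : C ∈ filterOplus F₀ F₁) :
    {n : ℕ | 2 * n + 1 ∈ C} ∈ F₁ := by
  obtain ⟨A, hA, B, hB, rfl⟩ := hC; rwa [setOplus_odds]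

def myToFun (F₀ F₁ : Set (Set ℕ)) (x : Dtimes F₀ F₁) : Doplus F₀ F₁ :=
  ⟨⟨seqOplus x.1.1.s x.1.2.s, setOplus x.1.1.A x.1.2.A,
      ⟨_, x.1.1.mem, _, x.1.2.mem, rfl⟩⟩, by
    have hx : x.1.1.s.length = x.1.2.s.length := x.2
    show (seqOplus x.1.1.s x.1.2.s).length % 2 = 0
    rw [length_seqOplus]; omega⟩

def myInvFun (F₀ F₁ : Set (Set ℕ)) (y : Doplus F₀ F₁) : Dtimes F₀ F₁ :=
  ⟨(⟨evens y.1.s, {n : ℕ | 2 * n ∈ y.1.A}, evens_mem y.1.mem⟩,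
    ⟨odds y.1.s, {n : ℕ | 2 * n + 1 ∈ y.1.A}, odds_mem y.1.mem⟩), by
    show (evens y.1.s).length = (odds y.1.s).length
    rw [length_evens, length_odds]⟩

lemma my_left_inv (F₀ F₁ : Set (Set ℕ)) (x : Dtimes F₀ F₁) :
    myInvFun F₀ F₁ (myToFun F₀ F₁ x) = x := by
  have hx : x.1.1.s.length = x.1.2.s.length := x.2
  apply Subtype.ext
  apply Prod.ext
  · exact MCond.ext' (evens_seqOplus hx) setOplus_evens
  · exact MCond.ext' (odds_seqOplus hx) setOplus_odds

lemma my_right_inv (F₀ F₁ : Set (Set ℕ)) (y : Doplus F₀ F₁) :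
    myToFun F₀ F₁ (myInvFun F₀ F₁ y) = y := by
  have hy : y.1.s.length % 2 = 0 := y.2
  apply Subtype.ext
  exact MCond.ext' (seqOplus_recombine hy) (setOplus_recombine _)

lemma my_map_rel (F₀ F₁ : Set (Set ℕ)) (a b : Dtimes F₀ F₁) :
    myToFun F₀ F₁ a ≤ myToFun F₀ F₁ b ↔ a ≤ b := by
  have ha : a.1.1.s.length = a.1.2.s.length := a.2
  have hb : b.1.1.s.length = b.1.2.s.length := b.2
  show (myToFun F₀ F₁ a).1 ≤ (myToFun F₀ F₁ b).1 ↔ a.1 ≤ b.1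
  rw [show (myToFun F₀ F₁ a).1 = ⟨seqOplus a.1.1.s a.1.2.s, setOplus a.1.1.A a.1.2.A,
      ⟨_, a.1.1.mem, _, a.1.2.mem, rfl⟩⟩ from rfl,
    show (myToFun F₀ F₁ b).1 = ⟨seqOplus b.1.1.s b.1.2.s, setOplus b.1.1.A b.1.2.A,
      ⟨_, b.1.1.mem, _, b.1.2.mem, rfl⟩⟩ from rfl]
  rw [MCond.le_def, Prod.le_def, MCond.le_def, MCond.le_def]
  simp only [seqOplus_prefix_iff hb ha, setOplus_subset_iff, oplus_cond3_iff hb ha]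
  tauto

theorem mathias_product_oplus_equivalent (F₀ F₁ : Set (Set ℕ))
    (h₀ : IsFilterOnNat F₀) (h₁ : IsFilterOnNat F₁) :
    (∀ p : MCond F₀ × MCond F₁, ∃ q ≤ p, q ∈ Dtimes F₀ F₁) ∧
    (∀ p : MCond (filterOplus F₀ F₁), ∃ q ≤ p, q ∈ Doplus F₀ F₁) ∧
    ∃ e : (Dtimes F₀ F₁) ≃o (Doplus F₀ F₁),
      ∀ x : Dtimes F₀ F₁,
        ((e x : MCond (filterOplus F₀ F₁)).s
            = seqOplus (x : MCond F₀ × MCond F₁).1.s (x : MCond F₀ × MCond F₁).2.s) ∧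
        ((e x : MCond (filterOplus F₀ F₁)).A
            = setOplus (x : MCond F₀ × MCond F₁).1.A (x : MCond F₀ × MCond F₁).2.A) := by
  refine ⟨?_, ?_, ?_⟩
  · rintro ⟨p₀, p₁⟩
    refine ⟨(⟨p₀.s ++ List.replicate (max p₀.s.length p₁.s.length - p₀.s.length) false,
        p₀.A, p₀.mem⟩,
      ⟨p₁.s ++ List.replicate (max p₀.s.length p₁.s.length - p₁.s.length) false,
        p₁.A, p₁.mem⟩), ⟨pad_le p₀ _, pad_le p₁ _⟩, ?_⟩
    show (_ ++ _ : List Bool).length = (_ ++ _ : List Bool).length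
    simp only [List.length_append, List.length_replicate]
    omega
  · intro p
    by_cases h : p.s.length % 2 = 0
    · exact ⟨p, le_refl p, h⟩
    · refine ⟨⟨p.s ++ List.replicate 1 false, p.A, p.mem⟩, pad_le p 1, ?_⟩
      show (_ ++ _ : List Bool).length % 2 = 0
      simp only [List.length_append, List.length_replicate]
      omega
  · exact ⟨⟨⟨myToFun F₀ F₁, myInvFun F₀ F₁, my_left_inv F₀ F₁, my_right_inv F₀ F₁⟩,
      my_map_rel F₀ F₁ _ _⟩, fun x => ⟨rfl, rfl⟩⟩
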